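/- Let X = (X₁,…,Xₙ) ~ N(0, Σ) with Σ positive definite and Σ⁻¹𝟏 > 0, and set κ² = 𝟏ᵀ Σ⁻¹ 𝟏. Then ln Prob(min(X₁,…,Xₙ) ≥ t) ~ −t²κ²/2 as t → +∞; in particular κ² = −2 · lim_{t→∞} t⁻² ln Prob(minᵢ Xᵢ ≥ t). -/

import Mathlib

open Matrix MeasureTheory Filter Asymptotics

set_option maxHeartbeats 2000000

variable {n : ℕ}

lemma gauss_dot_symm (A : Matrix (Fin n) (Fin n) ℝ) (hA : A.IsHermitian)
    (x v : Fin n → ℝ) : x ⬝ᵥ A.mulVec v = v ⬝ᵥ A.mulVec x := by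
  simp only [dotProduct, Matrix.mulVec, dotProduct, Finset.mul_sum]
  rw [Finset.sum_comm]
  refine Finset.sum_congr rfl fun i _ => Finset.sum_congr rfl fun j _ => ?_
  have h : A i j = A j i := by
    have := congrFun (congrFun hA.eq j) i
    simpa [Matrix.conjTranspose_apply] using this
  rw [h]; ring

lemma gauss_q_cont (A : Matrix (Fin n) (Fin n) ℝ) :
    Continuous (fun v : Fin n → ℝ => v ⬝ᵥ A.mulVec v) := by
  simp only [dotProduct, Matrix.mulVec, dotProduct]
  refine continuous_finset_sum _ fun i _ => (continuous_apply i).mul ?_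
  exact continuous_finset_sum _ fun j _ => continuous_const.mul (continuous_apply j)

lemma gauss_q_expand (A : Matrix (Fin n) (Fin n) ℝ) (hA : A.IsHermitian)
    (x v : Fin n → ℝ) :
    (x + v) ⬝ᵥ A.mulVec (x + v) =
      x ⬝ᵥ A.mulVec x + 2 * (A.mulVec x ⬝ᵥ v) + v ⬝ᵥ A.mulVec v := by
  have h1 : x ⬝ᵥ A.mulVec v = v ⬝ᵥ A.mulVec x := gauss_dot_symm A hA x v
  have h2 : v ⬝ᵥ A.mulVec x = A.mulVec x ⬝ᵥ v := dotProduct_comm _ _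
  simp only [Matrix.mulVec_add, dotProduct_add, add_dotProduct, h1, h2]
  ring

lemma gauss_q_smul (A : Matrix (Fin n) (Fin n) ℝ) (c : ℝ) (v : Fin n → ℝ) :
    (c • v) ⬝ᵥ A.mulVec (c • v) = c ^ 2 * (v ⬝ᵥ A.mulVec v) := by
  rw [Matrix.mulVec_smul, smul_dotProduct, dotProduct_smul]
  simp only [smul_eq_mul]; ring

lemma gauss_coercive [NeZero n] (A : Matrix (Fin n) (Fin n) ℝ) (hA : A.PosDef) :
    ∃ ε : ℝ, 0 < ε ∧ ∀ v : Fin n → ℝ, ε * (∑ i, v i ^ 2) ≤ v ⬝ᵥ A.mulVec v := by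
  have hn : 0 < (n : ℝ) := by
    have := Nat.pos_of_ne_zero (NeZero.ne n); exact_mod_cast this
  have hne : Nonempty (Fin n) := ⟨⟨0, Nat.pos_of_ne_zero (NeZero.ne n)⟩⟩
  have hsne : (Metric.sphere (0 : Fin n → ℝ) 1).Nonempty := by
    refine ⟨fun _ => 1, ?_⟩
    simp [mem_sphere_iff_norm, pi_norm_const]
  obtain ⟨v₀, hv₀, hmin⟩ := (isCompact_sphere (0 : Fin n → ℝ) 1).exists_isMinOn hsne
    ((gauss_q_cont A).continuousOn)
  have hv₀ne : v₀ ≠ 0 := by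
    intro h
    rw [mem_sphere_iff_norm, h, zero_sub, norm_neg, norm_zero] at hv₀
    norm_num at hv₀
  set m : ℝ := v₀ ⬝ᵥ A.mulVec v₀ with hmdef
  have hm : 0 < m := by simpa using hA.dotProduct_mulVec_pos hv₀ne
  refine ⟨m / n, div_pos hm hn, fun v => ?_⟩
  rcases eq_or_ne v 0 with rfl | hv
  · simp
  · have hnv : 0 < ‖v‖ := norm_pos_iff.mpr hv
    have hu : (‖v‖⁻¹ • v) ∈ Metric.sphere (0 : Fin n → ℝ) 1 := by
      rw [mem_sphere_iff_norm, sub_zero, norm_smul, norm_inv, norm_norm,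
        inv_mul_cancel₀ hnv.ne']
    have hqu : m ≤ (‖v‖⁻¹ • v) ⬝ᵥ A.mulVec (‖v‖⁻¹ • v) := hmin hu
    have hqv : v ⬝ᵥ A.mulVec v = ‖v‖ ^ 2 * ((‖v‖⁻¹ • v) ⬝ᵥ A.mulVec (‖v‖⁻¹ • v)) := by
      rw [gauss_q_smul]
      field_simp
    have hsum : (∑ i, v i ^ 2) ≤ n * ‖v‖ ^ 2 := by
      calc (∑ i, v i ^ 2) ≤ ∑ _i : Fin n, ‖v‖ ^ 2 := by
            refine Finset.sum_le_sum fun i _ => ?_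
            have := norm_le_pi_norm v i
            calc v i ^ 2 = |v i| ^ 2 := (sq_abs _).symm
              _ ≤ ‖v‖ ^ 2 := by
                  apply pow_le_pow_left₀ (abs_nonneg _)
                  simpa [Real.norm_eq_abs] using this
        _ = n * ‖v‖ ^ 2 := by simp [Finset.sum_const, nsmul_eq_mul]
    calc m / n * (∑ i, v i ^ 2) ≤ m / n * (n * ‖v‖ ^ 2) := by
          apply mul_le_mul_of_nonneg_left hsum (le_of_lt (div_pos hm hn))
      _ = m * ‖v‖ ^ 2 := by field_simp
      _ ≤ ‖v‖ ^ 2 * ((‖v‖⁻¹ • v) ⬝ᵥ A.mulVec (‖v‖⁻¹ • v)) := by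
          rw [mul_comm m]
          exact mul_le_mul_of_nonneg_left hqu (by positivity)
      _ = v ⬝ᵥ A.mulVec v := hqv.symm

lemma gauss_integrable [NeZero n] (A : Matrix (Fin n) (Fin n) ℝ) (hA : A.PosDef) :
    Integrable (fun v : Fin n → ℝ => Real.exp (-(1/2) * (v ⬝ᵥ A.mulVec v))) := by
  obtain ⟨ε, hε, hcoer⟩ := gauss_coercive A hA
  have hb : Integrable (fun v : Fin n → ℝ => ∏ i, Real.exp (-(ε/2) * (v i) ^ 2)) :=
    Integrable.fintype_prod (fun _ => integrable_exp_neg_mul_sq (by positivity))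
  refine hb.mono' ?_ ?_
  · exact (Real.continuous_exp.comp
      (continuous_const.mul (gauss_q_cont A))).aestronglyMeasurable
  · refine Filter.Eventually.of_forall fun v => ?_
    rw [Real.norm_eq_abs, abs_of_pos (Real.exp_pos _), ← Real.exp_sum]
    apply Real.exp_le_exp.mpr
    have := hcoer v
    have h2 : ∑ i, -(ε/2) * (v i) ^ 2 = -(1/2) * (ε * ∑ i, v i ^ 2) := by
      rw [Finset.mul_sum]; rw [Finset.mul_sum]; apply Finset.sum_congr rfl; intros; ring
    rw [h2]
    nlinarith

/-- The centered multivariate Gaussian measure `N(0, S)` on `ℝⁿ`, defined by its density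
with respect to Lebesgue measure. -/
noncomputable def gaussianOfCov {n : ℕ} (S : Matrix (Fin n) (Fin n) ℝ) :
    Measure (Fin n → ℝ) :=
  volume.withDensity fun u =>
    ENNReal.ofReal
      (((2 * Real.pi) ^ n * S.det) ^ (-(1 : ℝ) / 2) *
        Real.exp (-(1 / 2) * (u ⬝ᵥ S⁻¹.mulVec u)))

/-- Let `X ~ N(0, Σ)` with `Σ` positive definite and `Σ⁻¹ 𝟏 > 0`, and `κ² = 𝟏ᵀ Σ⁻¹ 𝟏`.
Then `ln Prob(min_i X_i ≥ t) ~ −t²κ²/2` as `t → ∞`; in particular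
`t⁻² ln Prob(minᵢ Xᵢ ≥ t) → −κ²/2`, i.e. `κ² = −2 lim_{t→∞} t⁻² ln Prob(minᵢ Xᵢ ≥ t)`. -/
theorem stmt_8 {n : ℕ} [NeZero n] (S : Matrix (Fin n) (Fin n) ℝ)
    (hS : S.PosDef)
    (hpos : ∀ i, 0 < S⁻¹.mulVec (fun _ => (1 : ℝ)) i)
    (κ : ℝ) (hκpos : 0 < κ)
    (hκ : κ ^ 2 = (fun _ => (1 : ℝ)) ⬝ᵥ S⁻¹.mulVec (fun _ => (1 : ℝ))) :
    (fun t : ℝ => Real.log ((gaussianOfCov S {x | ∀ i, t ≤ x i}).toReal)) ~[atTop]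
      (fun t : ℝ => -(t ^ 2 * κ ^ 2 / 2)) ∧
    Tendsto (fun t : ℝ =>
        Real.log ((gaussianOfCov S {x | ∀ i, t ≤ x i}).toReal) / t ^ 2)
      atTop (nhds (-(κ ^ 2) / 2)) := by
  classical
  have hA : (S⁻¹).PosDef := hS.inv
  have hAh : (S⁻¹).IsHermitian := hA.1
  set q : (Fin n → ℝ) → ℝ := fun v => v ⬝ᵥ (S⁻¹).mulVec v with hqdef
  set w : Fin n → ℝ := (S⁻¹).mulVec (fun _ => (1 : ℝ)) with hwdef
  set c₀ : ℝ := ((2 * Real.pi) ^ n * S.det) ^ (-(1 : ℝ) / 2) with hc0def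
  have hdet : 0 < S.det := hS.det_pos
  have hc₀ : 0 < c₀ := by
    apply Real.rpow_pos_of_pos
    have := Real.pi_pos
    positivity
  have hqcont : Continuous q := gauss_q_cont (S⁻¹)
  have hInt : Integrable (fun v : Fin n → ℝ => Real.exp (-(1 / 2) * q v)) :=
    gauss_integrable _ hA
  set J : ENNReal := ∫⁻ v : Fin n → ℝ, ENNReal.ofReal (Real.exp (-(1 / 2) * q v)) with hJdef
  have hJfin : J ≠ ⊤ := hInt.lintegral_lt_top.ne
  set CJ : ℝ := J.toReal with hCJdef
  have hCJ0 : 0 ≤ CJ := ENNReal.toReal_nonneg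
  have hJeq : J = ENNReal.ofReal CJ := (ENNReal.ofReal_toReal hJfin).symm
  set M : ℝ := ∑ i, ∑ j, |S⁻¹ i j| with hMdef
  have hM0 : 0 ≤ M :=
    Finset.sum_nonneg fun _ _ => Finset.sum_nonneg fun _ _ => abs_nonneg _
  have hκ2pos : 0 < κ ^ 2 := by positivity
  have hmeas : ∀ t : ℝ, MeasurableSet {x : Fin n → ℝ | ∀ i, t ≤ x i} := by
    intro t
    have h : {x : Fin n → ℝ | ∀ i, t ≤ x i} = ⋂ i, {x : Fin n → ℝ | t ≤ x i} := by
      ext x; simp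
    rw [h]
    exact MeasurableSet.iInter fun i =>
      measurableSet_le measurable_const (measurable_pi_apply i)
  have hμ : ∀ t : ℝ, gaussianOfCov S {x | ∀ i, t ≤ x i}
      = ∫⁻ x in {x : Fin n → ℝ | ∀ i, t ≤ x i},
          ENNReal.ofReal (c₀ * Real.exp (-(1 / 2) * q x)) := by
    intro t
    simp only [gaussianOfCov]
    rw [withDensity_apply _ (hmeas t)]
  -- expansion
  have hexp : ∀ (t : ℝ) (v : Fin n → ℝ),
      q (t • (fun _ => (1 : ℝ)) + v) = t ^ 2 * κ ^ 2 + 2 * (t * (w ⬝ᵥ v)) + q v := by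
    intro t v
    have h0 := gauss_q_expand (S⁻¹) hAh (t • (fun _ => (1 : ℝ))) v
    have h1 : (S⁻¹).mulVec (t • (fun _ => (1 : ℝ))) = t • w := by
      rw [hwdef, Matrix.mulVec_smul]
    have h2 : (t • (fun _ => (1 : ℝ))) ⬝ᵥ (S⁻¹).mulVec (t • (fun _ => (1 : ℝ)))
        = t ^ 2 * κ ^ 2 := by
      rw [h1, smul_dotProduct, dotProduct_smul, hκ]
      simp only [smul_eq_mul]; ring
    have h3 : (S⁻¹).mulVec (t • (fun _ => (1 : ℝ))) ⬝ᵥ v = t * (w ⬝ᵥ v) := by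
      rw [h1, smul_dotProduct]; simp only [smul_eq_mul]
    show (t • (fun _ => (1 : ℝ)) + v) ⬝ᵥ (S⁻¹).mulVec (t • (fun _ => (1 : ℝ)) + v)
        = t ^ 2 * κ ^ 2 + 2 * (t * (w ⬝ᵥ v)) + q v
    rw [h0, h2, h3]
  -- upper bound
  have hub : ∀ t : ℝ, 0 ≤ t → gaussianOfCov S {x | ∀ i, t ≤ x i}
      ≤ ENNReal.ofReal (c₀ * Real.exp (-(1 / 2) * (t ^ 2 * κ ^ 2)) * CJ) := by
    intro t ht
    rw [hμ t]
    have hmeasg : Measurable fun x : Fin n → ℝ =>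
        ENNReal.ofReal (c₀ * Real.exp (-(1 / 2) * (t ^ 2 * κ ^ 2))) *
          ENNReal.ofReal (Real.exp (-(1 / 2) * q (x - t • (fun _ => (1 : ℝ))))) := by
      apply Measurable.const_mul
      apply ENNReal.measurable_ofReal.comp
      apply Continuous.measurable
      exact Real.continuous_exp.comp (continuous_const.mul
        (hqcont.comp (continuous_id.sub continuous_const)))
    have key : ∀ x ∈ {x : Fin n → ℝ | ∀ i, t ≤ x i},
        ENNReal.ofReal (c₀ * Real.exp (-(1 / 2) * q x)) ≤
          ENNReal.ofReal (c₀ * Real.exp (-(1 / 2) * (t ^ 2 * κ ^ 2))) *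
            ENNReal.ofReal (Real.exp (-(1 / 2) * q (x - t • (fun _ => (1 : ℝ))))) := by
      intro x hx
      rw [← ENNReal.ofReal_mul (by positivity)]
      apply ENNReal.ofReal_le_ofReal
      rw [mul_assoc, ← Real.exp_add]
      apply mul_le_mul_of_nonneg_left _ hc₀.le
      apply Real.exp_le_exp.mpr
      set v : Fin n → ℝ := x - t • (fun _ => (1 : ℝ)) with hvdef
      have hxv : x = t • (fun _ => (1 : ℝ)) + v := by rw [hvdef]; abel
      have hq : q x = t ^ 2 * κ ^ 2 + 2 * (t * (w ⬝ᵥ v)) + q v := by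
        conv_lhs => rw [hxv]
        exact hexp t v
      have hwv : 0 ≤ w ⬝ᵥ v := by
        rw [dotProduct]
        apply Finset.sum_nonneg
        intro i _
        apply mul_nonneg (hpos i).le
        have hxi : t ≤ x i := hx i
        simp only [hvdef, Pi.sub_apply, Pi.smul_apply, smul_eq_mul, mul_one]
        linarith
      rw [hq]
      nlinarith [mul_nonneg ht hwv]
    calc ∫⁻ x in {x : Fin n → ℝ | ∀ i, t ≤ x i},
          ENNReal.ofReal (c₀ * Real.exp (-(1 / 2) * q x))
        ≤ ∫⁻ x in {x : Fin n → ℝ | ∀ i, t ≤ x i},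
            ENNReal.ofReal (c₀ * Real.exp (-(1 / 2) * (t ^ 2 * κ ^ 2))) *
              ENNReal.ofReal (Real.exp (-(1 / 2) * q (x - t • (fun _ => (1 : ℝ))))) :=
          setLIntegral_mono hmeasg key
      _ ≤ ∫⁻ x, ENNReal.ofReal (c₀ * Real.exp (-(1 / 2) * (t ^ 2 * κ ^ 2))) *
              ENNReal.ofReal (Real.exp (-(1 / 2) * q (x - t • (fun _ => (1 : ℝ))))) :=
          setLIntegral_le_lintegral _ _
      _ = ENNReal.ofReal (c₀ * Real.exp (-(1 / 2) * (t ^ 2 * κ ^ 2))) *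
            ∫⁻ x, ENNReal.ofReal (Real.exp (-(1 / 2) * q (x - t • (fun _ => (1 : ℝ))))) := by
          rw [lintegral_const_mul]
          apply ENNReal.measurable_ofReal.comp
          apply Continuous.measurable
          exact Real.continuous_exp.comp (continuous_const.mul
            (hqcont.comp (continuous_id.sub continuous_const)))
      _ = ENNReal.ofReal (c₀ * Real.exp (-(1 / 2) * (t ^ 2 * κ ^ 2))) * J := by
          rw [lintegral_sub_right_eq_self
            (fun v => ENNReal.ofReal (Real.exp (-(1 / 2) * q v))) (t • (fun _ => (1 : ℝ)))]
      _ = ENNReal.ofReal (c₀ * Real.exp (-(1 / 2) * (t ^ 2 * κ ^ 2)) * CJ) := by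
          rw [hJeq, ← ENNReal.ofReal_mul (by positivity)]
  -- lower bound
  have hlb : ∀ t : ℝ, 0 ≤ t →
      ENNReal.ofReal (c₀ * Real.exp (-(1 / 2) * (t ^ 2 * κ ^ 2 + 2 * t * κ ^ 2 + M)))
        ≤ gaussianOfCov S {x | ∀ i, t ≤ x i} := by
    intro t ht
    rw [hμ t]
    set cube : Set (Fin n → ℝ) := Set.pi Set.univ (fun _ => Set.Icc t (t + 1)) with hcube
    have hsub : cube ⊆ {x : Fin n → ℝ | ∀ i, t ≤ x i} := fun x hx i =>
      (hx i (Set.mem_univ i)).1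
    have hvol : (volume : Measure (Fin n → ℝ)) cube = 1 := by
      rw [hcube, volume_pi_pi]
      simp [Real.volume_Icc]
    have hdens : ∀ x ∈ cube,
        ENNReal.ofReal (c₀ * Real.exp (-(1 / 2) * (t ^ 2 * κ ^ 2 + 2 * t * κ ^ 2 + M)))
          ≤ ENNReal.ofReal (c₀ * Real.exp (-(1 / 2) * q x)) := by
      intro x hx
      apply ENNReal.ofReal_le_ofReal
      apply mul_le_mul_of_nonneg_left _ hc₀.le
      apply Real.exp_le_exp.mpr
      set v : Fin n → ℝ := x - t • (fun _ => (1 : ℝ)) with hvdef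
      have hv01 : ∀ i, 0 ≤ v i ∧ v i ≤ 1 := by
        intro i
        have hxi := hx i (Set.mem_univ i)
        simp only [hvdef, Pi.sub_apply, Pi.smul_apply, smul_eq_mul, mul_one]
        exact ⟨by linarith [hxi.1], by linarith [hxi.2]⟩
      have hqx : q x = t ^ 2 * κ ^ 2 + 2 * (t * (w ⬝ᵥ v)) + q v := by
        have hxv : x = t • (fun _ => (1 : ℝ)) + v := by rw [hvdef]; abel
        conv_lhs => rw [hxv]
        exact hexp t v
      have hwv : w ⬝ᵥ v ≤ κ ^ 2 := by
        rw [hκ, dotProduct, dotProduct]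
        apply Finset.sum_le_sum
        intro i _
        have h1 := hpos i
        have h2 := (hv01 i).2
        have h3 := (hv01 i).1
        nlinarith
      have hqv : q v ≤ M := by
        show v ⬝ᵥ (S⁻¹).mulVec v ≤ M
        rw [dotProduct, hMdef]
        apply Finset.sum_le_sum
        intro i _
        rw [Matrix.mulVec, dotProduct, Finset.mul_sum]
        apply Finset.sum_le_sum
        intro j _
        have hvi := hv01 i
        have hvj := hv01 j
        calc v i * (S⁻¹ i j * v j) ≤ |v i * (S⁻¹ i j * v j)| := le_abs_self _
          _ = |v i| * |S⁻¹ i j| * |v j| := by rw [abs_mul, abs_mul]; ring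
          _ ≤ 1 * |S⁻¹ i j| * 1 := by
              have h1 : |v i| ≤ 1 := by rw [abs_of_nonneg hvi.1]; exact hvi.2
              have h2 : |v j| ≤ 1 := by rw [abs_of_nonneg hvj.1]; exact hvj.2
              exact mul_le_mul (mul_le_mul_of_nonneg_right h1 (abs_nonneg _)) h2
                (abs_nonneg _) (by positivity)
          _ = |S⁻¹ i j| := by ring
      have h4 : t * (w ⬝ᵥ v) ≤ t * κ ^ 2 := mul_le_mul_of_nonneg_left hwv ht
      linarith [hqx, hqv, h4]
    have hmeascube : MeasurableSet cube :=
      MeasurableSet.univ_pi fun _ => measurableSet_Icc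
    calc ENNReal.ofReal (c₀ * Real.exp (-(1 / 2) * (t ^ 2 * κ ^ 2 + 2 * t * κ ^ 2 + M)))
        = ∫⁻ _x in cube,
            ENNReal.ofReal
              (c₀ * Real.exp (-(1 / 2) * (t ^ 2 * κ ^ 2 + 2 * t * κ ^ 2 + M))) := by
          rw [setLIntegral_const, hvol, mul_one]
      _ ≤ ∫⁻ x in cube, ENNReal.ofReal (c₀ * Real.exp (-(1 / 2) * q x)) := by
          apply setLIntegral_mono
          · apply ENNReal.measurable_ofReal.comp
            apply Continuous.measurable
            exact continuous_const.mul (Real.continuous_exp.comp (continuous_const.mul hqcont))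
          · exact hdens
      _ ≤ ∫⁻ x in {x : Fin n → ℝ | ∀ i, t ≤ x i},
            ENNReal.ofReal (c₀ * Real.exp (-(1 / 2) * q x)) :=
          lintegral_mono_set hsub
  -- real-valued bounds
  have hfin : ∀ t : ℝ, 0 ≤ t → gaussianOfCov S {x | ∀ i, t ≤ x i} ≠ ⊤ := fun t ht =>
    ((hub t ht).trans_lt ENNReal.ofReal_lt_top).ne
  have hPlb : ∀ t : ℝ, 0 ≤ t →
      c₀ * Real.exp (-(1 / 2) * (t ^ 2 * κ ^ 2 + 2 * t * κ ^ 2 + M)) ≤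
        (gaussianOfCov S {x | ∀ i, t ≤ x i}).toReal := by
    intro t ht
    have h := ENNReal.toReal_mono (hfin t ht) (hlb t ht)
    rwa [ENNReal.toReal_ofReal (by positivity)] at h
  have hPub : ∀ t : ℝ, 0 ≤ t →
      (gaussianOfCov S {x | ∀ i, t ≤ x i}).toReal ≤
        c₀ * Real.exp (-(1 / 2) * (t ^ 2 * κ ^ 2)) * CJ := by
    intro t ht
    exact ENNReal.toReal_le_of_le_ofReal (by positivity) (hub t ht)
  have hPpos : ∀ t : ℝ, 0 ≤ t → 0 < (gaussianOfCov S {x | ∀ i, t ≤ x i}).toReal := fun t ht =>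
    lt_of_lt_of_le (by positivity) (hPlb t ht)
  have hCJpos : 0 < CJ := by
    have h2 := hPub 0 le_rfl
    have h3 := hPpos 0 le_rfl
    nlinarith [mul_pos hc₀ (Real.exp_pos (-(1 / 2) * ((0 : ℝ) ^ 2 * κ ^ 2)))]
  set F : ℝ → ℝ := fun t => Real.log ((gaussianOfCov S {x | ∀ i, t ≤ x i}).toReal) with hFdef
  set G : ℝ → ℝ := fun t => -(t ^ 2 * κ ^ 2 / 2) with hGdef
  have hflb : ∀ t : ℝ, 0 ≤ t →
      Real.log c₀ + (-(1 / 2) * (t ^ 2 * κ ^ 2 + 2 * t * κ ^ 2 + M)) ≤ F t := by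
    intro t ht
    have h := hPlb t ht
    have h0 : (0 : ℝ) < c₀ * Real.exp (-(1 / 2) * (t ^ 2 * κ ^ 2 + 2 * t * κ ^ 2 + M)) := by
      positivity
    calc Real.log c₀ + (-(1 / 2) * (t ^ 2 * κ ^ 2 + 2 * t * κ ^ 2 + M))
        = Real.log (c₀ * Real.exp (-(1 / 2) * (t ^ 2 * κ ^ 2 + 2 * t * κ ^ 2 + M))) := by
          rw [Real.log_mul hc₀.ne' (Real.exp_ne_zero _), Real.log_exp]
      _ ≤ F t := Real.log_le_log h0 h
  have hfub : ∀ t : ℝ, 0 ≤ t →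
      F t ≤ Real.log (c₀ * CJ) + (-(1 / 2) * (t ^ 2 * κ ^ 2)) := by
    intro t ht
    calc F t ≤ Real.log (c₀ * Real.exp (-(1 / 2) * (t ^ 2 * κ ^ 2)) * CJ) :=
          Real.log_le_log (hPpos t ht) (hPub t ht)
      _ = Real.log (c₀ * CJ) + (-(1 / 2) * (t ^ 2 * κ ^ 2)) := by
          rw [show c₀ * Real.exp (-(1 / 2) * (t ^ 2 * κ ^ 2)) * CJ
              = c₀ * CJ * Real.exp (-(1 / 2) * (t ^ 2 * κ ^ 2)) from by ring,
            Real.log_mul (mul_pos hc₀ hCJpos).ne' (Real.exp_ne_zero _), Real.log_exp]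
  set C : ℝ := |Real.log (c₀ * CJ)| + |Real.log c₀| + κ ^ 2 + M / 2 + 1 with hCdef
  have hCnn : 0 ≤ C := by positivity
  have habs : ∀ t : ℝ, 1 ≤ t → |F t - G t| ≤ C * t := by
    intro t ht
    have ht0 : (0 : ℝ) ≤ t := by linarith
    have h1 := hflb t ht0
    have h2 := hfub t ht0
    have hGt : G t = -(t ^ 2 * κ ^ 2 / 2) := rfl
    rw [abs_le, hGt]
    have ha2 := neg_abs_le (Real.log c₀)
    have ha3 := le_abs_self (Real.log (c₀ * CJ))
    have hCt : C * t = |Real.log (c₀ * CJ)| * t + |Real.log c₀| * t + κ ^ 2 * t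
        + (M / 2) * t + t := by rw [hCdef]; ring
    have p1 : |Real.log c₀| ≤ |Real.log c₀| * t := by
      nth_rewrite 1 [← mul_one |Real.log c₀|]
      exact mul_le_mul_of_nonneg_left ht (abs_nonneg _)
    have p2 : M / 2 ≤ M / 2 * t := by
      nth_rewrite 1 [← mul_one (M / 2)]
      exact mul_le_mul_of_nonneg_left ht (by linarith)
    have p4 : |Real.log (c₀ * CJ)| ≤ |Real.log (c₀ * CJ)| * t := by
      nth_rewrite 1 [← mul_one |Real.log (c₀ * CJ)|]
      exact mul_le_mul_of_nonneg_left ht (abs_nonneg _)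
    have p5 : κ ^ 2 * t = t * κ ^ 2 := mul_comm _ _
    have p6 : 0 ≤ |Real.log c₀| * t := mul_nonneg (abs_nonneg _) ht0
    have p7 : 0 ≤ |Real.log (c₀ * CJ)| * t := mul_nonneg (abs_nonneg _) ht0
    have p8 : 0 ≤ κ ^ 2 * t := mul_nonneg hκ2pos.le ht0
    have p9 : 0 ≤ M / 2 * t := mul_nonneg (by linarith) ht0
    constructor
    · linarith
    · linarith
  have hbigO1 : (F - G) =O[atTop] (fun t : ℝ => t) := by
    rw [Asymptotics.isBigO_iff]
    refine ⟨C, ?_⟩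
    filter_upwards [eventually_ge_atTop (1 : ℝ)] with t ht
    rw [Pi.sub_apply, Real.norm_eq_abs, Real.norm_eq_abs]
    calc |F t - G t| ≤ C * t := habs t ht
      _ ≤ C * |t| := mul_le_mul_of_nonneg_left (le_abs_self t) hCnn
  have hlitO : (fun t : ℝ => t) =o[atTop] (fun t : ℝ => t ^ 2) := by
    have h := Asymptotics.isLittleO_pow_pow_atTop_of_lt (𝕜 := ℝ) (by norm_num : 1 < 2)
    simpa using h
  have hbigO2 : (fun t : ℝ => t ^ 2) =O[atTop] G := by
    rw [Asymptotics.isBigO_iff]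
    refine ⟨2 / κ ^ 2, Filter.Eventually.of_forall fun t => ?_⟩
    rw [Real.norm_eq_abs, Real.norm_eq_abs]
    have hGt : G t = -(t ^ 2 * κ ^ 2 / 2) := rfl
    rw [hGt, abs_neg, abs_of_nonneg (by positivity : (0 : ℝ) ≤ t ^ 2 * κ ^ 2 / 2),
      abs_of_nonneg (sq_nonneg t)]
    have : 2 / κ ^ 2 * (t ^ 2 * κ ^ 2 / 2) = t ^ 2 := by
      field_simp
    exact le_of_eq this.symm
  have hEquiv : F ~[atTop] G := (hbigO1.trans_isLittleO hlitO).trans_isBigO hbigO2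
  constructor
  · exact hEquiv
  · have hgne : ∀ᶠ t : ℝ in atTop, G t ≠ 0 := by
      filter_upwards [eventually_ge_atTop (1 : ℝ)] with t ht
      have htp : (0 : ℝ) < t := lt_of_lt_of_le one_pos ht
      have h1 : (0 : ℝ) < t ^ 2 * κ ^ 2 / 2 := by positivity
      show -(t ^ 2 * κ ^ 2 / 2) ≠ 0
      intro h
      rw [neg_eq_zero] at h
      exact h1.ne' h
    have hdiv : Tendsto (fun t => F t / G t) atTop (nhds 1) :=
      (Asymptotics.isEquivalent_iff_tendsto_one hgne).mp hEquiv
    have hmul := hdiv.mul_const (-κ ^ 2 / 2)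
    rw [one_mul] at hmul
    have heq : (fun t : ℝ => F t / G t * (-κ ^ 2 / 2)) =ᶠ[atTop] fun t : ℝ => F t / t ^ 2 := by
      filter_upwards [eventually_ge_atTop (1 : ℝ)] with t ht
      have ht0 : t ≠ 0 := by intro h; rw [h] at ht; norm_num at ht
      have hGt : G t = -(t ^ 2 * κ ^ 2 / 2) := rfl
      rw [hGt]
      field_simp
    exact Filter.Tendsto.congr' heq hmul
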